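/- Any two binary cubic forms over ℝ with the same nonzero discriminant are SL₂(ℝ)-equivalent, and any two binary cubic forms over ℂ with the same nonzero discriminant are SL₂(ℂ)-equivalent. Consequently, for each Δ ≠ 0 there is exactly one SL₂(ℝ)-orbit of binary cubic forms over ℝ of discriminant Δ, and exactly one SL₂(ℂ)-orbit of binary cubic forms over ℂ of discriminant Δ. -/

import Mathlib

/-- A binary cubic form `a x³ + 3b x²y + 3c xy² + d y³` over a commutative ring,
recorded by its coefficient quadruple `(a, b, c, d)`. -/
structure BinaryCubic (R : Type*) [CommRing R] where
  a : R
  b : R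
  c : R
  d : R

namespace BinaryCubic

variable {R : Type*} [CommRing R]

/-- Evaluation of the binary cubic form `a x³ + 3b x²y + 3c xy² + d y³`. -/
def eval (f : BinaryCubic R) (x y : R) : R :=
  f.a * x ^ 3 + 3 * f.b * x ^ 2 * y + 3 * f.c * x * y ^ 2 + f.d * y ^ 3

/-- The discriminant `a²d² − 3b²c² + 4ac³ + 4b³d − 6abcd` of a binary cubic form. -/
def disc (f : BinaryCubic R) : R :=
  f.a ^ 2 * f.d ^ 2 - 3 * f.b ^ 2 * f.c ^ 2 + 4 * f.a * f.c ^ 3 + 4 * f.b ^ 3 * f.d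
    - 6 * f.a * f.b * f.c * f.d

/-- The action of a 2×2 matrix `g = (p q; r s)` on binary cubic forms by linear change of
variables: `(g · f)(x, y) = f (p x + q y) (r x + s y)`, written out on coefficients. -/
def act (g : Matrix (Fin 2) (Fin 2) R) (f : BinaryCubic R) : BinaryCubic R where
  a := f.a * g 0 0 ^ 3 + 3 * f.b * g 0 0 ^ 2 * g 1 0 + 3 * f.c * g 0 0 * g 1 0 ^ 2
      + f.d * g 1 0 ^ 3
  b := f.a * g 0 0 ^ 2 * g 0 1
      + f.b * (g 0 0 ^ 2 * g 1 1 + 2 * g 0 0 * g 0 1 * g 1 0)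
      + f.c * (2 * g 0 0 * g 1 0 * g 1 1 + g 0 1 * g 1 0 ^ 2)
      + f.d * g 1 0 ^ 2 * g 1 1
  c := f.a * g 0 0 * g 0 1 ^ 2
      + f.b * (g 0 1 ^ 2 * g 1 0 + 2 * g 0 0 * g 0 1 * g 1 1)
      + f.c * (g 0 0 * g 1 1 ^ 2 + 2 * g 0 1 * g 1 0 * g 1 1)
      + f.d * g 1 0 * g 1 1 ^ 2
  d := f.a * g 0 1 ^ 3 + 3 * f.b * g 0 1 ^ 2 * g 1 1 + 3 * f.c * g 0 1 * g 1 1 ^ 2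
      + f.d * g 1 1 ^ 3

/-- Sanity check: `act` really is the linear change of variables. -/
theorem eval_act (g : Matrix (Fin 2) (Fin 2) R) (f : BinaryCubic R) (x y : R) :
    (act g f).eval x y = f.eval (g 0 0 * x + g 0 1 * y) (g 1 0 * x + g 1 1 * y) := by
  simp only [eval, act]; ring

/-- Two binary cubic forms over `R` are `SL₂(R)`-equivalent if they are related by a
determinant-one linear change of variables. -/
def SLEquiv (f f' : BinaryCubic R) : Prop :=
  ∃ g : Matrix (Fin 2) (Fin 2) R, g.det = 1 ∧ act g f = f'

/-- Scalar multiplication of a binary cubic form (multiplying all coefficients). -/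
def smul (r : R) (f : BinaryCubic R) : BinaryCubic R :=
  ⟨r * f.a, r * f.b, r * f.c, r * f.d⟩

/-- The scaled Hessian `h_f(x,y) = (b²−ac)x² + (bc−ad)xy + (c²−bd)y²` of a binary cubic form. -/
def hess (f : BinaryCubic R) (x y : R) : R :=
  (f.b ^ 2 - f.a * f.c) * x ^ 2 + (f.b * f.c - f.a * f.d) * x * y
    + (f.c ^ 2 - f.b * f.d) * y ^ 2

/-- The Jacobian covariant `g_f = f_x · (h_f)_y − f_y · (h_f)_x` of a binary cubic form,
written out as a function of `x` and `y`. -/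
def gcov (f : BinaryCubic R) (x y : R) : R :=
  (3 * f.a * x ^ 2 + 6 * f.b * x * y + 3 * f.c * y ^ 2)
      * ((f.b * f.c - f.a * f.d) * x + 2 * (f.c ^ 2 - f.b * f.d) * y)
    - (3 * f.b * x ^ 2 + 6 * f.c * x * y + 3 * f.d * y ^ 2)
      * (2 * (f.b ^ 2 - f.a * f.c) * x + (f.b * f.c - f.a * f.d) * y)

/-- A binary cubic form over a field is reducible if it factors as a homogeneous linear form
times a homogeneous quadratic form over the field. -/
def Reducible {F : Type*} [Field F] (f : BinaryCubic F) : Prop :=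
  ∃ l₁ l₂ q₁ q₂ q₃ : F, ∀ x y : F,
    f.eval x y = (l₁ * x + l₂ * y) * (q₁ * x ^ 2 + q₂ * x * y + q₃ * y ^ 2)

/-- Coefficientwise image of a binary cubic form under a ring homomorphism. -/
def map {R S : Type*} [CommRing R] [CommRing S] (φ : R →+* S) (f : BinaryCubic R) :
    BinaryCubic S :=
  ⟨φ f.a, φ f.b, φ f.c, φ f.d⟩

end BinaryCubic

namespace BinaryCubic

variable {R : Type*} [CommRing R]

theorem disc_act (g : Matrix (Fin 2) (Fin 2) R) (f : BinaryCubic R) :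
    disc (act g f) = g.det ^ 6 * disc f := by
  simp only [disc, act, Matrix.det_fin_two]
  ring

theorem act_act (g h : Matrix (Fin 2) (Fin 2) R) (f : BinaryCubic R) :
    act h (act g f) = act (g * h) f := by
  simp only [act, Matrix.mul_apply, Fin.sum_univ_two, mk.injEq]
  refine ⟨by ring, by ring, by ring, by ring⟩

theorem act_one (f : BinaryCubic R) : act (1 : Matrix (Fin 2) (Fin 2) R) f = f := by
  obtain ⟨a, b, c, d⟩ := f
  simp [act, Matrix.one_apply, mk.injEq]

theorem slEquiv_refl (f : BinaryCubic R) : SLEquiv f f :=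
  ⟨1, Matrix.det_one, act_one f⟩

theorem slEquiv_trans {f g h : BinaryCubic R} (h₁ : SLEquiv f g) (h₂ : SLEquiv g h) :
    SLEquiv f h := by
  obtain ⟨m₁, hm₁, rfl⟩ := h₁
  obtain ⟨m₂, hm₂, rfl⟩ := h₂
  exact ⟨m₁ * m₂, by rw [Matrix.det_mul, hm₁, hm₂, one_mul], (act_act m₁ m₂ f).symm ▸ rfl⟩

theorem slEquiv_symm {f g : BinaryCubic R} (h : SLEquiv f g) : SLEquiv g f := by
  obtain ⟨m, hm, rfl⟩ := h
  refine ⟨m.adjugate, by rw [Matrix.det_adjugate, hm, one_pow], ?_⟩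
  rw [act_act, Matrix.mul_adjugate, hm, one_smul, act_one]

/-- Any form with nonzero discriminant is equivalent to one with vanishing `a`-coefficient,
given that cubics have roots. -/
theorem exists_slEquiv_a_eq_zero {F : Type*} [Field F]
    (hroot : ∀ a b c d : F, a ≠ 0 → ∃ t : F,
      a * t ^ 3 + 3 * b * t ^ 2 + 3 * c * t + d = 0)
    (f : BinaryCubic F) : ∃ f' : BinaryCubic F, SLEquiv f f' ∧ f'.a = 0 := by
  by_cases hfa : f.a = 0
  · exact ⟨f, slEquiv_refl f, hfa⟩
  · obtain ⟨t, ht⟩ := hroot f.a f.b f.c f.d hfa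
    refine ⟨act !![t, -1; (1 : F), 0] f, ⟨_, ?_, rfl⟩, ?_⟩
    · rw [Matrix.det_fin_two_of]; ring
    · show f.a * (!![t, -1; (1 : F), 0] 0 0) ^ 3 + _ + _ + _ = 0
      simp only [Matrix.cons_val', Matrix.cons_val_zero, Matrix.cons_val_one, Matrix.head_cons,
        Matrix.empty_val', Matrix.cons_val_fin_one, Matrix.head_fin_const, Matrix.of_apply]
      linear_combination ht

/-- Normal form: every form of nonzero discriminant is equivalent to `⟨0, b, 0, d⟩`. -/
theorem exists_slEquiv_normal {F : Type*} [Field F] (h2 : (2 : F) ≠ 0)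
    (hroot : ∀ a b c d : F, a ≠ 0 → ∃ t : F,
      a * t ^ 3 + 3 * b * t ^ 2 + 3 * c * t + d = 0)
    (f : BinaryCubic F) (hf : disc f ≠ 0) :
    ∃ b d : F, SLEquiv f ⟨0, b, 0, d⟩ := by
  obtain ⟨f₁, he₁, ha₁⟩ := exists_slEquiv_a_eq_zero hroot f
  have hd₁ : disc f₁ ≠ 0 := by
    obtain ⟨g, hg, rfl⟩ := he₁
    rw [disc_act, hg]; simpa using hf
  have hb₁ : f₁.b ≠ 0 := by
    intro hb
    apply hd₁
    simp only [disc, ha₁, hb]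
    ring
  set t : F := -f₁.c / (2 * f₁.b) with htdef
  refine ⟨f₁.b, 3 * f₁.b * t ^ 2 + 3 * f₁.c * t + f₁.d,
    slEquiv_trans he₁ ⟨!![(1 : F), t; 0, 1], by rw [Matrix.det_fin_two_of]; ring, ?_⟩⟩
  simp only [act, Matrix.cons_val', Matrix.cons_val_zero, Matrix.cons_val_one, Matrix.head_cons,
    Matrix.empty_val', Matrix.cons_val_fin_one, Matrix.head_fin_const, Matrix.of_apply,
    mk.injEq, ha₁]
  refine ⟨by ring, by ring, ?_, by ring⟩
  field_simp [htdef]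
  rw [htdef, div_eq_mul_inv]
  linear_combination (-f₁.c) * mul_inv_cancel₀ (mul_ne_zero h2 hb₁)

theorem slEquiv_of_disc_eq {F : Type*} [Field F] (h2 : (2 : F) ≠ 0)
    (hroot : ∀ a b c d : F, a ≠ 0 → ∃ t : F,
      a * t ^ 3 + 3 * b * t ^ 2 + 3 * c * t + d = 0)
    (f g : BinaryCubic F) (hf : disc f ≠ 0) (hfg : disc f = disc g) : SLEquiv f g := by
  have hg : disc g ≠ 0 := hfg ▸ hf
  obtain ⟨b₁, d₁, he₁⟩ := exists_slEquiv_normal h2 hroot f hf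
  obtain ⟨b₂, d₂, he₂⟩ := exists_slEquiv_normal h2 hroot g hg
  have hdisc₁ : disc f = 4 * b₁ ^ 3 * d₁ := by
    obtain ⟨m, hm, heq⟩ := he₁
    have h := disc_act m f
    rw [heq, hm, one_pow, one_mul] at h
    rw [← h]
    show (0 : F) ^ 2 * d₁ ^ 2 - 3 * b₁ ^ 2 * 0 ^ 2 + 4 * 0 * 0 ^ 3 + 4 * b₁ ^ 3 * d₁
      - 6 * 0 * b₁ * 0 * d₁ = _
    ring
  have hdisc₂ : disc g = 4 * b₂ ^ 3 * d₂ := by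
    obtain ⟨m, hm, heq⟩ := he₂
    have h := disc_act m g
    rw [heq, hm, one_pow, one_mul] at h
    rw [← h]
    show (0 : F) ^ 2 * d₂ ^ 2 - 3 * b₂ ^ 2 * 0 ^ 2 + 4 * 0 * 0 ^ 3 + 4 * b₂ ^ 3 * d₂
      - 6 * 0 * b₂ * 0 * d₂ = _
    ring
  have hb₁ : b₁ ≠ 0 := by
    intro h; apply hf; rw [hdisc₁, h]; ring
  have hb₂ : b₂ ≠ 0 := by
    intro h; apply hg; rw [hdisc₂, h]; ring
  have h4 : (4 : F) ≠ 0 := by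
    have : (4 : F) = 2 * 2 := by norm_num
    rw [this]; exact mul_ne_zero h2 h2
  have key : b₁ ^ 3 * d₁ = b₂ ^ 3 * d₂ := by
    apply mul_left_cancel₀ h4
    rw [← hfg] at hdisc₂
    linear_combination hdisc₁.symm.trans hdisc₂
  set u : F := b₂ / b₁ with hu
  have hu0 : u ≠ 0 := div_ne_zero hb₂ hb₁
  have hmid : SLEquiv (⟨0, b₁, 0, d₁⟩ : BinaryCubic F) ⟨0, b₂, 0, d₂⟩ := by
    refine ⟨!![u, 0; 0, u⁻¹], by rw [Matrix.det_fin_two_of]; field_simp; simp, ?_⟩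
    simp only [act, Matrix.cons_val', Matrix.cons_val_zero, Matrix.cons_val_one,
      Matrix.head_cons, Matrix.empty_val', Matrix.cons_val_fin_one, Matrix.head_fin_const,
      Matrix.of_apply, mk.injEq]
    refine ⟨by ring, ?_, by ring, ?_⟩
    · field_simp [hu]
      rw [hu, div_eq_mul_inv]
      linear_combination (b₂ * b₁⁻¹) * b₂ * mul_inv_cancel₀ hb₁
    · rw [hu]
      field_simp
      linear_combination key
  exact slEquiv_trans he₁ (slEquiv_trans hmid (slEquiv_symm he₂))

end BinaryCubic

open Polynomial in
theorem cubic_root_real (a b c d : ℝ) (ha : a ≠ 0) :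
    ∃ t : ℝ, a * t ^ 3 + 3 * b * t ^ 2 + 3 * c * t + d = 0 := by
  have main : ∀ a b c d : ℝ, 0 < a → ∃ t : ℝ,
      a * t ^ 3 + 3 * b * t ^ 2 + 3 * c * t + d = 0 := by
    intro a b c d ha
    set P : Polynomial ℝ := C a * X ^ 3 + C (3 * b) * X ^ 2 + C (3 * c) * X + C d with hP
    have hdeg : (0 : WithBot ℕ) < P.degree := by
      rw [hP, degree_cubic ha.ne']; norm_num
    have hlc : P.leadingCoeff = a := by rw [hP]; exact leadingCoeff_cubic ha.ne'
    have htop := P.tendsto_atTop_of_leadingCoeff_nonneg hdeg (hlc ▸ ha.le)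
    obtain ⟨x₁, hx₁⟩ := (htop.eventually_ge_atTop 0).exists
    set Q : Polynomial ℝ :=
      C a * X ^ 3 + C (-(3 * b)) * X ^ 2 + C (3 * c) * X + C (-d) with hQ
    have hdegQ : (0 : WithBot ℕ) < Q.degree := by
      rw [hQ, degree_cubic ha.ne']; norm_num
    have hlcQ : Q.leadingCoeff = a := by rw [hQ]; exact leadingCoeff_cubic ha.ne'
    have htopQ := Q.tendsto_atTop_of_leadingCoeff_nonneg hdegQ (hlcQ ▸ ha.le)
    obtain ⟨x₂, hx₂⟩ := (htopQ.eventually_ge_atTop 0).exists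
    have hQP : Q.eval x₂ = -(P.eval (-x₂)) := by
      simp only [hP, hQ, eval_add, eval_mul, eval_pow, eval_C, eval_X]
      ring
    have hle : P.eval (-x₂) ≤ 0 := by
      rw [hQP] at hx₂; linarith
    have h0 : (0 : ℝ) ∈ Set.Icc (P.eval (-x₂)) (P.eval x₁) := ⟨hle, hx₁⟩
    obtain ⟨t, ht⟩ := intermediate_value_univ (-x₂) x₁ P.continuous h0
    refine ⟨t, ?_⟩
    simp only [hP, eval_add, eval_mul, eval_pow, eval_C, eval_X] at ht
    linear_combination ht
  rcases ha.lt_or_gt with h | h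
  · obtain ⟨t, ht⟩ := main (-a) (-b) (-c) (-d) (by linarith)
    exact ⟨t, by linear_combination -ht⟩
  · exact main a b c d h

open Polynomial in
theorem cubic_root_complex (a b c d : ℂ) (ha : a ≠ 0) :
    ∃ t : ℂ, a * t ^ 3 + 3 * b * t ^ 2 + 3 * c * t + d = 0 := by
  set P : Polynomial ℂ := C a * X ^ 3 + C (3 * b) * X ^ 2 + C (3 * c) * X + C d with hP
  obtain ⟨t, ht⟩ := Complex.exists_root (f := P)
    (by rw [hP, degree_cubic ha]; norm_num)
  rw [Polynomial.IsRoot] at ht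
  simp only [hP, eval_add, eval_mul, eval_pow, eval_C, eval_X] at ht
  exact ⟨t, by linear_combination ht⟩

open BinaryCubic in
/-- Any two binary cubic forms over `ℝ` (resp. over `ℂ`) with the same nonzero
discriminant are `SL₂(ℝ)`-equivalent (resp. `SL₂(ℂ)`-equivalent); consequently for each
`Δ ≠ 0` there is exactly one such orbit of discriminant `Δ`. -/
theorem slEquiv_of_disc_eq_real_complex :
    (∀ f g : BinaryCubic ℝ, disc f ≠ 0 → disc f = disc g → SLEquiv f g) ∧
    (∀ f g : BinaryCubic ℂ, disc f ≠ 0 → disc f = disc g → SLEquiv f g) :=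
  ⟨fun f g => slEquiv_of_disc_eq two_ne_zero cubic_root_real f g,
   fun f g => slEquiv_of_disc_eq two_ne_zero cubic_root_complex f g⟩
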